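/- Let 0 < α < 1/2 and ε > 0 be such that ε/(1−2α) ≤ 1/2, and let l be such that (1−2α)/(2(2α)^{l+1}) − 1 − ε > 0. Then for every A > 0 there exists K_0 such that for all K ≥ K_0 and all (b_0,…,b_K) ∈ [1,∞)^{K+1}: ∑_{i=0}^{K}(1/2 + b_i/(K+2)^{1+ε})/((b_{i-1}+b_i)^α (b_i+b_{i+1})^α) > A (with b_{-1} = b_{K+1} = 0). -/

import Mathlib

open Filter NNReal

private lemma my_rpow_add_le {x y p : ℝ} (hx : 0 ≤ x) (hy : 0 ≤ y)
    (hp0 : 0 ≤ p) (hp1 : p ≤ 1) : (x + y) ^ p ≤ x ^ p + y ^ p := by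
  have h := NNReal.rpow_add_le_add_rpow x.toNNReal y.toNNReal hp0 hp1
  have hxy : ((x.toNNReal + y.toNNReal : ℝ≥0) : ℝ) = x + y := by
    push_cast [Real.coe_toNNReal x hx, Real.coe_toNNReal y hy]; ring
  calc (x + y) ^ p = (((x.toNNReal + y.toNNReal : ℝ≥0) : ℝ)) ^ p := by rw [hxy]
    _ = (((x.toNNReal + y.toNNReal) ^ p : ℝ≥0) : ℝ) := by rw [NNReal.coe_rpow]
    _ ≤ ((x.toNNReal ^ p + y.toNNReal ^ p : ℝ≥0) : ℝ) := by exact_mod_cast h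
    _ = x ^ p + y ^ p := by
        push_cast [NNReal.coe_rpow, Real.coe_toNNReal x hx, Real.coe_toNNReal y hy]; ring

private lemma aux_E1 {x p : ℝ} (hx : 0 ≤ x) (hp : p ≠ 0) : (x ^ p) ^ (1/p) = x := by
  rw [← Real.rpow_mul hx, mul_one_div_cancel hp, Real.rpow_one]

private lemma aux_E3 {x s p : ℝ} (hx : 0 ≤ x) (hs : 0 < s) (hp0 : 0 < p) (hp1 : p < 1) :
    (x / s ^ (1-p)) ^ p * (s ^ p) ^ (1-p) = x ^ p := by
  have hsp : (0:ℝ) < s ^ ((1-p)*p) := Real.rpow_pos_of_pos hs _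
  rw [Real.div_rpow hx (Real.rpow_nonneg hs.le _), ← Real.rpow_mul hs.le, ← Real.rpow_mul hs.le,
    show p * (1-p) = (1-p)*p by ring]
  exact div_mul_cancel₀ _ (ne_of_gt hsp)

/-- Key quantitative inequality: there is a constant `C = C(α)` such that for every
admissible tuple, `K+1 ≤ C (K+2)^{(1+ε)2α} S`. -/
private lemma keyIneq (α ε : ℝ) (hα0 : 0 < α) (hα : α < 1/2) (hε : 0 < ε) :
    ∃ C : ℝ, 0 < C ∧ ∀ K : ℕ, ∀ b : ℤ → ℝ,
      (∀ i ∈ Finset.Icc (0:ℤ) (K:ℤ), 1 ≤ b i) →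
      (∀ i, i ∉ Finset.Icc (0:ℤ) (K:ℤ) → b i = 0) →
      ((K:ℝ)+1) ≤ C * ((K:ℝ)+2) ^ ((1+ε)*(2*α)) *
        ∑ i ∈ Finset.Icc (0:ℤ) (K:ℤ),
          (1/2 + b i / ((K:ℝ)+2) ^ ((1:ℝ)+ε)) /
            ((b (i-1) + b i) ^ α * (b i + b (i+1)) ^ α) := by
  have h2α : (0:ℝ) < 1 - 2*α := by linarith
  obtain ⟨p, hpdef⟩ : ∃ x : ℝ, x = 1 - 2*α := ⟨_, rfl⟩
  have hp0 : 0 < p := by rw [hpdef]; exact h2α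
  have hp1 : p < 1 := by rw [hpdef]; linarith
  have h1p : 0 < 1 - p := by linarith
  obtain ⟨D, hDdef⟩ : ∃ x : ℝ, x = (3:ℝ) ^ ((1-p)/p) := ⟨_, rfl⟩
  have hD0 : 0 < D := hDdef ▸ Real.rpow_pos_of_pos (by norm_num) _
  have hC0 : 0 < 2 ^ p * (3*D) ^ (1-p) :=
    mul_pos (Real.rpow_pos_of_pos two_pos p)
      (Real.rpow_pos_of_pos (by linarith : (0:ℝ) < 3*D) _)
  refine ⟨2 ^ p * (3*D) ^ (1-p), hC0, fun K b hb1 hb0 => ?_⟩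
  set I := Finset.Icc (0:ℤ) (K:ℤ) with hIdef
  set M : ℝ := ((K:ℝ)+2) ^ ((1:ℝ)+ε) with hMdef
  have hM0 : 0 < M := Real.rpow_pos_of_pos (by positivity) _
  have hbnn : ∀ i, 0 ≤ b i := by
    intro i
    by_cases h : i ∈ I
    · linarith [hb1 i h]
    · rw [hb0 i h]
  have hsnn : ∀ i : ℤ, (0:ℝ) ≤ b (i-1) + b i + b (i+1) := by
    intro i
    have := hbnn (i-1); have := hbnn i; have := hbnn (i+1); linarith
  have hs0 : ∀ i ∈ I, (0:ℝ) < b (i-1) + b i + b (i+1) := by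
    intro i hi
    have := hb1 i hi; have := hbnn (i-1); have := hbnn (i+1); linarith
  obtain ⟨S, hSdef⟩ : ∃ x : ℝ, x = ∑ i ∈ I, (1/2 + b i / M) /
      ((b (i-1) + b i) ^ α * (b i + b (i+1)) ^ α) := ⟨_, rfl⟩
  obtain ⟨T, hTdef⟩ : ∃ x : ℝ, x = ∑ i ∈ I, b i ^ p := ⟨_, rfl⟩
  obtain ⟨W, hWdef⟩ : ∃ x : ℝ, x = ∑ i ∈ I, (b (i-1) + b i + b (i+1)) ^ p := ⟨_, rfl⟩
  obtain ⟨U, hUdef⟩ : ∃ x : ℝ, x = ∑ i ∈ I, 1 / (b (i-1) + b i + b (i+1)) ^ (1-p) := ⟨_, rfl⟩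
  obtain ⟨V, hVdef⟩ : ∃ x : ℝ, x = ∑ i ∈ I, b i / (b (i-1) + b i + b (i+1)) ^ (1-p) := ⟨_, rfl⟩
  have hcardI : ((I.card : ℝ)) = (K:ℝ)+1 := by
    have h : I.card = K + 1 := by
      rw [hIdef, Int.card_Icc]; omega
    rw [h]; push_cast; ring
  -- positivity of each term
  have hterm_pos : ∀ i ∈ I, 0 < (1/2 + b i / M) /
      ((b (i-1) + b i) ^ α * (b i + b (i+1)) ^ α) := by
    intro i hi
    have h1 := hb1 i hi
    have h2 := hbnn (i-1); have h3 := hbnn (i+1); have h4 := hbnn i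
    have hx : (0:ℝ) < b (i-1) + b i := by linarith
    have hy : (0:ℝ) < b i + b (i+1) := by linarith
    apply div_pos
    · have : 0 ≤ b i / M := div_nonneg h4 hM0.le
      linarith
    · exact mul_pos (Real.rpow_pos_of_pos hx α) (Real.rpow_pos_of_pos hy α)
  have hS_pos : 0 < S := by
    rw [hSdef]
    exact Finset.sum_pos hterm_pos ⟨0, by rw [hIdef, Finset.mem_Icc]; omega⟩
  -- pointwise bounds feeding into Hölder
  have hUi : ∀ i ∈ I, 1 / (b (i-1) + b i + b (i+1)) ^ (1-p) ≤
      2 * ((1/2 + b i / M) / ((b (i-1) + b i) ^ α * (b i + b (i+1)) ^ α)) := by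
    intro i hi
    have h1 := hb1 i hi
    have h2 := hbnn (i-1); have h3 := hbnn (i+1); have h4 := hbnn i
    have hx : (0:ℝ) < b (i-1) + b i := by linarith
    have hy : (0:ℝ) < b i + b (i+1) := by linarith
    have hs : (0:ℝ) < b (i-1) + b i + b (i+1) := hs0 i hi
    have hd_pos : 0 < (b (i-1) + b i) ^ α * (b i + b (i+1)) ^ α :=
      mul_pos (Real.rpow_pos_of_pos hx α) (Real.rpow_pos_of_pos hy α)
    have hd_le : (b (i-1) + b i) ^ α * (b i + b (i+1)) ^ α ≤
        (b (i-1) + b i + b (i+1)) ^ (1-p) := by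
      calc (b (i-1) + b i) ^ α * (b i + b (i+1)) ^ α
          ≤ (b (i-1) + b i + b (i+1)) ^ α * (b (i-1) + b i + b (i+1)) ^ α :=
            mul_le_mul (Real.rpow_le_rpow hx.le (by linarith) hα0.le)
              (Real.rpow_le_rpow hy.le (by linarith) hα0.le)
              (Real.rpow_nonneg hy.le α) (Real.rpow_nonneg hs.le α)
        _ = (b (i-1) + b i + b (i+1)) ^ (1-p) := by
            rw [← Real.rpow_add hs, show α + α = 1-p from by rw [hpdef]; ring]
    have hnum : (0:ℝ) ≤ b i / M := div_nonneg h4 hM0.le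
    have hkey : (1/2) / (b (i-1) + b i + b (i+1)) ^ (1-p) ≤
        (1/2 + b i / M) / ((b (i-1) + b i) ^ α * (b i + b (i+1)) ^ α) :=
      div_le_div₀ (by linarith) (by linarith) hd_pos hd_le
    calc 1 / (b (i-1) + b i + b (i+1)) ^ (1-p)
        = 2 * ((1/2) / (b (i-1) + b i + b (i+1)) ^ (1-p)) := by ring
      _ ≤ _ := by linarith [hkey]
  have hVi : ∀ i ∈ I, b i / (b (i-1) + b i + b (i+1)) ^ (1-p) ≤
      M * ((1/2 + b i / M) / ((b (i-1) + b i) ^ α * (b i + b (i+1)) ^ α)) := by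
    intro i hi
    have h1 := hb1 i hi
    have h2 := hbnn (i-1); have h3 := hbnn (i+1); have h4 := hbnn i
    have hx : (0:ℝ) < b (i-1) + b i := by linarith
    have hy : (0:ℝ) < b i + b (i+1) := by linarith
    have hs : (0:ℝ) < b (i-1) + b i + b (i+1) := hs0 i hi
    have hd_pos : 0 < (b (i-1) + b i) ^ α * (b i + b (i+1)) ^ α :=
      mul_pos (Real.rpow_pos_of_pos hx α) (Real.rpow_pos_of_pos hy α)
    have hd_le : (b (i-1) + b i) ^ α * (b i + b (i+1)) ^ α ≤
        (b (i-1) + b i + b (i+1)) ^ (1-p) := by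
      calc (b (i-1) + b i) ^ α * (b i + b (i+1)) ^ α
          ≤ (b (i-1) + b i + b (i+1)) ^ α * (b (i-1) + b i + b (i+1)) ^ α :=
            mul_le_mul (Real.rpow_le_rpow hx.le (by linarith) hα0.le)
              (Real.rpow_le_rpow hy.le (by linarith) hα0.le)
              (Real.rpow_nonneg hy.le α) (Real.rpow_nonneg hs.le α)
        _ = (b (i-1) + b i + b (i+1)) ^ (1-p) := by
            rw [← Real.rpow_add hs, show α + α = 1-p from by rw [hpdef]; ring]
    have hnum : (0:ℝ) ≤ b i / M := div_nonneg h4 hM0.le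
    have hkey2 : (b i / M) / (b (i-1) + b i + b (i+1)) ^ (1-p) ≤
        (1/2 + b i / M) / ((b (i-1) + b i) ^ α * (b i + b (i+1)) ^ α) :=
      div_le_div₀ (by linarith) (by linarith) hd_pos hd_le
    calc b i / (b (i-1) + b i + b (i+1)) ^ (1-p)
        = M * ((b i / M) / (b (i-1) + b i + b (i+1)) ^ (1-p)) := by
          rw [div_div, ← mul_div_assoc, mul_div_mul_left _ _ (ne_of_gt hM0)]
      _ ≤ _ := mul_le_mul_of_nonneg_left hkey2 hM0.le
  have hU2S : U ≤ 2 * S := by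
    rw [hUdef, hSdef, Finset.mul_sum]
    exact Finset.sum_le_sum hUi
  have hVMS : V ≤ M * S := by
    rw [hVdef, hSdef, Finset.mul_sum]
    exact Finset.sum_le_sum hVi
  -- comparison of the shifted sums
  have hshift : ∀ c : ℤ, -1 ≤ c → c ≤ 1 → ∑ i ∈ I, b (i + c) ^ p ≤ T := by
    intro c hc1 hc2
    have hinj : ∀ x ∈ I, ∀ y ∈ I, x + c = y + c → x = y := fun x _ y _ h => by omega
    have hsub : I.image (· + c) ⊆ Finset.Icc (-1 : ℤ) ((K:ℤ)+1) := by
      intro j hj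
      simp only [Finset.mem_image] at hj
      obtain ⟨i, hi, rfl⟩ := hj
      rw [hIdef, Finset.mem_Icc] at hi
      rw [Finset.mem_Icc]; omega
    have hIsub : I ⊆ Finset.Icc (-1 : ℤ) ((K:ℤ)+1) := by
      intro x hx
      rw [hIdef, Finset.mem_Icc] at hx
      rw [Finset.mem_Icc]; omega
    calc ∑ i ∈ I, b (i + c) ^ p
        = ∑ j ∈ I.image (· + c), b j ^ p :=
          (Finset.sum_image (f := fun j => b j ^ p) (g := fun i => i + c) hinj).symm
      _ ≤ ∑ j ∈ Finset.Icc (-1 : ℤ) ((K:ℤ)+1), b j ^ p := by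
          apply Finset.sum_le_sum_of_subset_of_nonneg hsub
          intro j _ _
          exact Real.rpow_nonneg (hbnn j) p
      _ = T := by
          rw [hTdef]
          refine (Finset.sum_subset hIsub fun j _ hnj => ?_).symm
          rw [hb0 j hnj, Real.zero_rpow (ne_of_gt hp0)]
  have hW3T : W ≤ 3 * T := by
    have hsub : ∀ i ∈ I, (b (i-1) + b i + b (i+1)) ^ p ≤
        b (i + (-1)) ^ p + b (i + 0) ^ p + b (i + 1) ^ p := by
      intro i _
      have h2 := hbnn (i-1); have h3 := hbnn (i+1); have h4 := hbnn i
      have step1 : (b (i-1) + b i + b (i+1)) ^ p ≤ (b (i-1) + b i) ^ p + b (i+1) ^ p :=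
        my_rpow_add_le (by linarith) h3 hp0.le hp1.le
      have step2 : (b (i-1) + b i) ^ p ≤ b (i-1) ^ p + b i ^ p :=
        my_rpow_add_le h2 h4 hp0.le hp1.le
      have e : i + (-1) = i - 1 := by ring
      have e0 : i + 0 = i := by ring
      rw [e, e0]
      linarith
    calc W ≤ ∑ i ∈ I, (b (i + (-1)) ^ p + b (i + 0) ^ p + b (i + 1) ^ p) := by
          rw [hWdef]; exact Finset.sum_le_sum hsub
      _ = (∑ i ∈ I, b (i + (-1)) ^ p) + (∑ i ∈ I, b (i + 0) ^ p) + (∑ i ∈ I, b (i + 1) ^ p) := by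
          rw [Finset.sum_add_distrib, Finset.sum_add_distrib]
      _ ≤ T + T + T := by
          have h1 := hshift (-1) (by norm_num) (by norm_num)
          have h2 := hshift 0 (by norm_num) (by norm_num)
          have h3 := hshift 1 (by norm_num) (by norm_num)
          linarith
      _ = 3 * T := by ring
  -- T is at least K+1
  have hT_lb : (K:ℝ)+1 ≤ T := by
    calc (K:ℝ)+1 = ∑ i ∈ I, (1:ℝ) := by
          rw [Finset.sum_const, nsmul_eq_mul, mul_one, hcardI]
      _ ≤ ∑ i ∈ I, b i ^ p := Finset.sum_le_sum fun i hi => Real.one_le_rpow (hb1 i hi) hp0.le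
      _ = T := hTdef.symm
  have hT_pos : 0 < T := lt_of_lt_of_le (by positivity) hT_lb
  -- Hölder setup
  have hpq : Real.HolderConjugate (1/p) (1/(1-p)) :=
    Real.holderConjugate_iff.mpr ⟨(one_lt_div hp0).mpr hp1, by rw [one_div, one_div, inv_inv, inv_inv]; ring⟩
  -- Hölder inequality H1
  have hH1 : (K:ℝ)+1 ≤ U ^ p * W ^ (1-p) := by
    have hf : ∀ i ∈ I, (0:ℝ) ≤ ((1:ℝ) / (b (i-1) + b i + b (i+1)) ^ (1-p)) ^ p :=
      fun i _ => Real.rpow_nonneg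
        (div_nonneg zero_le_one (Real.rpow_nonneg (hsnn i) _)) _
    have hg : ∀ i ∈ I, (0:ℝ) ≤ ((b (i-1) + b i + b (i+1)) ^ p) ^ (1-p) :=
      fun i _ => Real.rpow_nonneg (Real.rpow_nonneg (hsnn i) _) _
    have hold := Real.inner_le_Lp_mul_Lq_of_nonneg (s := I)
      (f := fun i => ((1:ℝ) / (b (i-1) + b i + b (i+1)) ^ (1-p)) ^ p)
      (g := fun i => ((b (i-1) + b i + b (i+1)) ^ p) ^ (1-p)) hpq hf hg
    calc (K:ℝ)+1
        = ∑ i ∈ I, (1:ℝ) := by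
          rw [Finset.sum_const, nsmul_eq_mul, mul_one, hcardI]
      _ = ∑ i ∈ I, (((1:ℝ) / (b (i-1) + b i + b (i+1)) ^ (1-p)) ^ p *
            (((b (i-1) + b i + b (i+1)) ^ p) ^ (1-p))) := by
          refine Finset.sum_congr rfl fun i hi => ?_
          have h := aux_E3 zero_le_one (hs0 i hi) hp0 hp1
          rw [Real.one_rpow] at h
          exact h.symm
      _ ≤ _ := hold
      _ = U ^ p * W ^ (1-p) := by
          rw [one_div_one_div, one_div_one_div]
          congr 1
          · congr 1
            rw [hUdef]
            exact Finset.sum_congr rfl fun i hi =>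
              aux_E1 (div_nonneg zero_le_one (Real.rpow_nonneg (hsnn i) _)) (ne_of_gt hp0)
          · congr 1
            rw [hWdef]
            exact Finset.sum_congr rfl fun i hi =>
              aux_E1 (Real.rpow_nonneg (hsnn i) _) (ne_of_gt h1p)
  -- Hölder inequality H2
  have hH2 : T ≤ V ^ p * W ^ (1-p) := by
    have hf : ∀ i ∈ I, (0:ℝ) ≤ (b i / (b (i-1) + b i + b (i+1)) ^ (1-p)) ^ p :=
      fun i _ => Real.rpow_nonneg
        (div_nonneg (hbnn i) (Real.rpow_nonneg (hsnn i) _)) _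
    have hg : ∀ i ∈ I, (0:ℝ) ≤ ((b (i-1) + b i + b (i+1)) ^ p) ^ (1-p) :=
      fun i _ => Real.rpow_nonneg (Real.rpow_nonneg (hsnn i) _) _
    have hold := Real.inner_le_Lp_mul_Lq_of_nonneg (s := I)
      (f := fun i => (b i / (b (i-1) + b i + b (i+1)) ^ (1-p)) ^ p)
      (g := fun i => ((b (i-1) + b i + b (i+1)) ^ p) ^ (1-p)) hpq hf hg
    calc T
        = ∑ i ∈ I, ((b i / (b (i-1) + b i + b (i+1)) ^ (1-p)) ^ p *
            (((b (i-1) + b i + b (i+1)) ^ p) ^ (1-p))) := by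
          rw [hTdef]
          exact Finset.sum_congr rfl fun i hi =>
            (aux_E3 (hbnn i) (hs0 i hi) hp0 hp1).symm
      _ ≤ _ := hold
      _ = V ^ p * W ^ (1-p) := by
          rw [one_div_one_div, one_div_one_div]
          congr 1
          · congr 1
            rw [hVdef]
            exact Finset.sum_congr rfl fun i hi =>
              aux_E1 (div_nonneg (hbnn i) (Real.rpow_nonneg (hsnn i) _)) (ne_of_gt hp0)
          · congr 1
            rw [hWdef]
            exact Finset.sum_congr rfl fun i hi =>
              aux_E1 (Real.rpow_nonneg (hsnn i) _) (ne_of_gt h1p)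
  -- nonnegativity of the sums
  have hU_nonneg : 0 ≤ U := by
    rw [hUdef]
    exact Finset.sum_nonneg fun i _ =>
      div_nonneg zero_le_one (Real.rpow_nonneg (hsnn i) _)
  have hV_nonneg : 0 ≤ V := by
    rw [hVdef]
    exact Finset.sum_nonneg fun i _ =>
      div_nonneg (hbnn i) (Real.rpow_nonneg (hsnn i) _)
  have hW_nonneg : 0 ≤ W := by
    rw [hWdef]
    exact Finset.sum_nonneg fun i _ => Real.rpow_nonneg (hsnn i) _
  have hMS_pos : 0 < M * S := mul_pos hM0 hS_pos
  -- from H2 derive T ≤ D*(M*S)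
  have hH2' : T ≤ (M*S) ^ p * (3*T) ^ (1-p) :=
    hH2.trans (mul_le_mul (Real.rpow_le_rpow hV_nonneg hVMS hp0.le)
      (Real.rpow_le_rpow hW_nonneg hW3T h1p.le) (Real.rpow_nonneg hW_nonneg _)
      (Real.rpow_nonneg hMS_pos.le _))
  have hTp : T ^ p ≤ (M*S) ^ p * 3 ^ (1-p) := by
    have e1 : (3*T) ^ (1-p) = 3 ^ (1-p) * T ^ (1-p) :=
      Real.mul_rpow (by norm_num) hT_pos.le
    have e2 : T ^ p * T ^ (1-p) = T := by
      rw [← Real.rpow_add hT_pos, show p + (1-p) = 1 by ring, Real.rpow_one]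
    have hTq : 0 < T ^ (1-p) := Real.rpow_pos_of_pos hT_pos _
    have h : T ^ p * T ^ (1-p) ≤ ((M*S) ^ p * 3 ^ (1-p)) * T ^ (1-p) := by
      rw [e2]
      calc T ≤ (M*S) ^ p * (3*T) ^ (1-p) := hH2'
        _ = ((M*S) ^ p * 3 ^ (1-p)) * T ^ (1-p) := by rw [e1]; ring
    exact le_of_mul_le_mul_right h hTq
  have hTDMS : T ≤ D * (M*S) := by
    have h := Real.rpow_le_rpow (Real.rpow_nonneg hT_pos.le p) hTp
      (le_of_lt (by positivity : (0:ℝ) < 1/p))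
    rw [aux_E1 hT_pos.le (ne_of_gt hp0)] at h
    rw [Real.mul_rpow (Real.rpow_nonneg hMS_pos.le p) (Real.rpow_nonneg (by norm_num) (1-p)),
      aux_E1 hMS_pos.le (ne_of_gt hp0), ← Real.rpow_mul (by norm_num : (0:ℝ) ≤ 3),
      mul_one_div] at h
    rw [hDdef]
    nlinarith [h]
  -- conclude
  have hW_fin : W ≤ 3 * (D * (M*S)) := by linarith
  have hmain : (K:ℝ)+1 ≤ (2*S) ^ p * (3*(D*(M*S))) ^ (1-p) :=
    hH1.trans (mul_le_mul (Real.rpow_le_rpow hU_nonneg hU2S hp0.le)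
      (Real.rpow_le_rpow hW_nonneg hW_fin h1p.le) (Real.rpow_nonneg hW_nonneg _)
      (Real.rpow_nonneg (by linarith : (0:ℝ) ≤ 2*S) _))
  have hre : (2*S) ^ p * (3*(D*(M*S))) ^ (1-p) =
      (2 ^ p * (3*D) ^ (1-p)) * ((K:ℝ)+2) ^ ((1+ε)*(2*α)) * S := by
    have e1 : (2*S) ^ p = 2 ^ p * S ^ p := Real.mul_rpow (by norm_num) hS_pos.le
    have e2 : (3:ℝ)*(D*(M*S)) = (3*D*M)*S := by ring
    have e3 : ((3*D*M)*S) ^ (1-p) = (3*D*M) ^ (1-p) * S ^ (1-p) :=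
      Real.mul_rpow (by positivity) hS_pos.le
    have e4 : ((3:ℝ)*D*M) ^ (1-p) = (3*D) ^ (1-p) * M ^ (1-p) :=
      Real.mul_rpow (by positivity) hM0.le
    have e5 : M ^ (1-p) = ((K:ℝ)+2) ^ ((1+ε)*(2*α)) := by
      rw [hMdef, ← Real.rpow_mul (by positivity)]
      congr 1
      rw [hpdef]; ring
    have e6 : S ^ p * S ^ (1-p) = S := by
      rw [← Real.rpow_add hS_pos, show p + (1-p) = 1 by ring, Real.rpow_one]
    calc (2*S) ^ p * (3*(D*(M*S))) ^ (1-p)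
        = (2 ^ p * S ^ p) * ((3*D) ^ (1-p) * (((K:ℝ)+2) ^ ((1+ε)*(2*α))) * S ^ (1-p)) := by
          rw [e1, e2, e3, e4, e5]
      _ = (2 ^ p * (3*D) ^ (1-p)) * ((K:ℝ)+2) ^ ((1+ε)*(2*α)) * (S ^ p * S ^ (1-p)) := by
          ring
      _ = _ := by rw [e6]
  rw [hre, hSdef] at hmain
  exact hmain

/-- Strengthened (liminf) form of the analytic lemma: let `0 < α < 1/2` and `ε > 0`
with `ε/(1-2α) ≤ 1/2`, and let `l` be such that `(1-2α)/(2(2α)^{l+1}) - 1 - ε > 0`.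
Then for every `A > 0` there exists `K₀` such that for all `K ≥ K₀` and all tuples
`(b_0,…,b_K) ∈ [1,∞)^{K+1}` (with the convention `b_{-1} = b_{K+1} = 0`):
`∑_{i=0}^{K} (1/2 + b_i/(K+2)^{1+ε})/((b_{i-1}+b_i)^α (b_i+b_{i+1})^α) > A`. -/
theorem stmt17 (α ε : ℝ) (hα0 : 0 < α) (hα : α < 1/2) (hε : 0 < ε)
    (hεα : ε/(1-2*α) ≤ 1/2) (l : ℕ)
    (hl : 0 < (1-2*α)/(2*(2*α)^(l+1)) - 1 - ε) :
    ∀ A : ℝ, 0 < A → ∃ K₀ : ℕ, ∀ K : ℕ, K₀ ≤ K → ∀ b : ℤ → ℝ,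
      (∀ i ∈ Finset.Icc (0:ℤ) (K:ℤ), 1 ≤ b i) →
      (∀ i, i ∉ Finset.Icc (0:ℤ) (K:ℤ) → b i = 0) →
      A < ∑ i ∈ Finset.Icc (0:ℤ) (K:ℤ),
        (1/2 + b i / ((K:ℝ)+2) ^ ((1:ℝ)+ε)) /
          ((b (i-1) + b i) ^ α * (b i + b (i+1)) ^ α) := by
  intro A hA
  obtain ⟨C, hC, hkey⟩ := keyIneq α ε hα0 hα hε
  set r : ℝ := (1+ε)*(2*α) with hrdef
  have h2α : 0 < 1 - 2*α := by linarith
  have hε2 : ε ≤ 1/2 * (1-2*α) := (div_le_iff₀ h2α).mp hεα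
  have hr : r < 1 := by
    have h1 : (0:ℝ) < 1 - α := by linarith
    nlinarith [mul_pos h2α h1, mul_le_mul_of_nonneg_left hε2 (by linarith : (0:ℝ) ≤ 2*α)]
  have h1r : 0 < 1 - r := by linarith
  have htt : Tendsto (fun K : ℕ => ((K:ℝ)+2) ^ (1-r)) atTop atTop := by
    apply (_root_.tendsto_rpow_atTop h1r).comp
    exact tendsto_atTop_add_const_right atTop 2 tendsto_natCast_atTop_atTop
  obtain ⟨K₀, hK₀⟩ := Filter.eventually_atTop.mp (htt.eventually_ge_atTop (2*C*(A+1)))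
  refine ⟨K₀, fun K hK b hb1 hb0 => ?_⟩
  have hkey' := hkey K b hb1 hb0
  have hKr : 2*C*(A+1) ≤ ((K:ℝ)+2) ^ (1-r) := hK₀ K hK
  have hbase : (0:ℝ) < (K:ℝ)+2 := by positivity
  have hX : 0 < ((K:ℝ)+2) ^ r := Real.rpow_pos_of_pos hbase r
  have hsplit : ((K:ℝ)+2) = ((K:ℝ)+2) ^ (1-r) * ((K:ℝ)+2) ^ r := by
    have h1 : (1-r) + r = 1 := by ring
    rw [← Real.rpow_add hbase, h1, Real.rpow_one]
  have h2 : 2*C*(A+1) * (((K:ℝ)+2) ^ r) ≤ ((K:ℝ)+2) ^ (1-r) * (((K:ℝ)+2) ^ r) :=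
    mul_le_mul_of_nonneg_right hKr hX.le
  have hKnn : (0:ℝ) ≤ (K:ℝ) := Nat.cast_nonneg K
  have hX1 : C*(A+1) * (((K:ℝ)+2) ^ r) ≤ (K:ℝ)+1 := by nlinarith [h2, hsplit, hKnn]
  have hCX : 0 < C * (((K:ℝ)+2) ^ r) := mul_pos hC hX
  have hbig : A * (C * (((K:ℝ)+2) ^ r)) < (K:ℝ)+1 := by nlinarith [hX1, hCX]
  have hfin := hbig.trans_le hkey'
  nlinarith [hfin, hCX]
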